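/- Large-deviation hashing bound (Lemma of Ahlswede–Dueck used in the achievability proof): let T ≥ 1 and M' ≥ 2 be integers, let λ ∈ (1/M', 1), and let Γ_1, …, Γ_T be independent identically distributed Bernoulli random variables with success probability 1/M'. Then Pr[ (1/T) Σ_{t=1}^T Γ_t > λ ] < 2^{−T(λ log₂ M' − 1)}. -/

import Mathlib

open Finset MeasureTheory ProbabilityTheory

/-- Large-deviation hashing bound (Ahlswede–Dueck): if `Γ_1, …, Γ_T` are i.i.d.
Bernoulli(1/M') random variables and `1/M' < λ < 1`, then
`Pr[(1/T) ∑_t Γ_t > λ] < 2^{-T(λ log₂ M' - 1)}`. -/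
theorem hashing_large_deviation_bound
    {Ω : Type*} [MeasurableSpace Ω] (μ : Measure Ω) [IsProbabilityMeasure μ]
    (T M' : ℕ) (hT : 1 ≤ T) (hM : 2 ≤ M')
    (lam : ℝ) (hlam1 : 1 / (M' : ℝ) < lam) (hlam2 : lam < 1)
    (Γ : Fin T → Ω → ℕ)
    (hmeas : ∀ t, Measurable (Γ t))
    (hval : ∀ t ω, Γ t ω = 0 ∨ Γ t ω = 1)
    (hindep : iIndepFun Γ μ)
    (hbern : ∀ t, (μ {ω | Γ t ω = 1}).toReal = 1 / (M' : ℝ)) :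
    (μ {ω | lam < (T : ℝ)⁻¹ * ∑ t, (Γ t ω : ℝ)}).toReal <
      2 ^ (-(T : ℝ) * (lam * Real.logb 2 M' - 1)) := by
  have hM2 : (2:ℝ) ≤ (M' : ℝ) := by exact_mod_cast hM
  have hM'pos : (0:ℝ) < M' := by linarith
  have hTpos : (0:ℝ) < T := by exact_mod_cast hT
  set t₀ : ℝ := Real.log M' with ht₀
  have ht₀nonneg : 0 ≤ t₀ := Real.log_nonneg (by linarith)
  -- real-valued versions of the random variables
  set X : Fin T → Ω → ℝ := fun i ω => (Γ i ω : ℝ) with hX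
  have hXmeas : ∀ i, Measurable (X i) := fun i => measurable_from_nat.comp (hmeas i)
  have hXindep : iIndepFun X μ :=
    hindep.comp (fun _ (n : ℕ) => (n : ℝ)) (fun _ => measurable_from_nat)
  -- pointwise formula for exp (t₀ * X i ω)
  have hptw : ∀ i ω, Real.exp (t₀ * X i ω)
      = 1 + ((M' : ℝ) - 1) * Set.indicator {ω | Γ i ω = 1} (fun _ => (1:ℝ)) ω := by
    intro i ω
    rcases hval i ω with h | h
    · simp [hX, h, Set.indicator_of_notMem (by simp [h] : ω ∉ {ω | Γ i ω = 1})]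
    · simp only [hX, h, Nat.cast_one, mul_one, ht₀, Real.exp_log hM'pos,
        Set.indicator_of_mem (by simp [h] : ω ∈ {ω | Γ i ω = 1}), Pi.one_apply]
      ring
  have hAmeas : ∀ i, MeasurableSet {ω | Γ i ω = 1} := fun i =>
    (hmeas i) (measurableSet_singleton 1)
  -- integrability of exp (t₀ * X i)
  have hint : ∀ i, Integrable (fun ω => Real.exp (t₀ * X i ω)) μ := by
    intro i
    have : Integrable (fun ω => 1 + ((M' : ℝ) - 1) *
        Set.indicator {ω | Γ i ω = 1} (fun _ => (1:ℝ)) ω) μ :=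
      (integrable_const 1).add (((integrable_const (1:ℝ)).indicator (hAmeas i)).const_mul _)
    exact this.congr (ae_of_all _ fun ω => (hptw i ω).symm)
  -- each mgf equals 2 - 1/M'
  have hmgf : ∀ i, mgf (X i) μ t₀ = 2 - 1 / (M' : ℝ) := by
    intro i
    have : mgf (X i) μ t₀ = ∫ ω, (1 + ((M' : ℝ) - 1) *
        Set.indicator {ω | Γ i ω = 1} (fun _ => (1:ℝ)) ω) ∂μ :=
      integral_congr_ae (ae_of_all _ fun ω => hptw i ω)
    rw [this, integral_add (integrable_const 1)
        (((integrable_const (1:ℝ)).indicator (hAmeas i)).const_mul _),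
      integral_const_mul, integral_indicator_const (1:ℝ) (hAmeas i), measureReal_def, hbern i]
    simp only [integral_const, probReal_univ, measure_univ, ENNReal.toReal_one, smul_eq_mul, one_mul]
    field_simp
    ring
  -- Chernoff bound
  set S : Ω → ℝ := ∑ i, X i with hS
  have hS_int : Integrable (fun ω => Real.exp (t₀ * S ω)) μ :=
    hXindep.integrable_exp_mul_sum hXmeas (fun i _ => hint i)
  have hchern : (μ {ω | lam * T ≤ S ω}).toReal ≤
      Real.exp (-t₀ * (lam * T)) * mgf S μ t₀ :=
    measure_ge_le_exp_mul_mgf (lam * T) ht₀nonneg hS_int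
  have hmgfS : mgf S μ t₀ = (2 - 1 / (M' : ℝ)) ^ T := by
    rw [hS, hXindep.mgf_sum hXmeas]
    simp [hmgf]
  -- the target event is contained in the Chernoff event
  have hsub : {ω | lam < (T : ℝ)⁻¹ * ∑ t, (Γ t ω : ℝ)} ⊆ {ω | lam * T ≤ S ω} := by
    intro ω hω
    simp only [Set.mem_setOf_eq] at hω ⊢
    have hSω : S ω = ∑ t, (Γ t ω : ℝ) := by simp [hS, hX]
    rw [hSω]
    rw [inv_mul_eq_div, lt_div_iff₀ hTpos] at hω
    linarith
  have hmono : (μ {ω | lam < (T : ℝ)⁻¹ * ∑ t, (Γ t ω : ℝ)}).toReal ≤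
      (μ {ω | lam * T ≤ S ω}).toReal :=
    ENNReal.toReal_mono (measure_ne_top μ _) (measure_mono hsub)
  -- strict inequality step
  have hstep : Real.exp (-t₀ * (lam * T)) * (2 - 1 / (M' : ℝ)) ^ T <
      Real.exp (-t₀ * (lam * T)) * 2 ^ T := by
    apply mul_lt_mul_of_pos_left _ (Real.exp_pos _)
    apply pow_lt_pow_left₀ _ _ (by omega : T ≠ 0)
    · have : 0 < 1 / (M' : ℝ) := by positivity
      linarith
    · have : 1 / (M' : ℝ) ≤ 1 := by
        rw [div_le_one hM'pos]; linarith
      linarith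
  -- identify the right-hand side
  have hrhs : Real.exp (-t₀ * (lam * T)) * 2 ^ T =
      2 ^ (-(T : ℝ) * (lam * Real.logb 2 M' - 1)) := by
    have h2pos : (0:ℝ) < 2 := by norm_num
    have hlog2 : Real.log 2 ≠ 0 := (Real.log_pos (by norm_num)).ne'
    rw [Real.rpow_def_of_pos h2pos]
    have hpow : (2:ℝ) ^ T = Real.exp (Real.log 2 * T) := by
      rw [← Real.rpow_natCast 2 T, Real.rpow_def_of_pos h2pos]
    rw [hpow, ← Real.exp_add]
    congr 1
    rw [Real.logb, ht₀]
    field_simp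
    ring
  calc (μ {ω | lam < (T : ℝ)⁻¹ * ∑ t, (Γ t ω : ℝ)}).toReal
      ≤ Real.exp (-t₀ * (lam * T)) * mgf S μ t₀ := le_trans hmono hchern
    _ = Real.exp (-t₀ * (lam * T)) * (2 - 1 / (M' : ℝ)) ^ T := by rw [hmgfS]
    _ < Real.exp (-t₀ * (lam * T)) * 2 ^ T := hstep
    _ = 2 ^ (-(T : ℝ) * (lam * Real.logb 2 M' - 1)) := hrhs
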